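/- Let (G,w) be a weighted graph and let C be an oriented simple circuit of G, identified with the corresponding vector of C(G,ℝ). Then C/‖C‖_w is a vertex (extreme point) of the stable ball B(G,w); in other words, C is proportional to a vertex of B(G,w), the factor of proportionality being exactly the w-length ‖C‖_w of the circuit. -/

import Mathlib

noncomputable section

/-- A finite connected multigraph with a fixed orientation of each edge. -/
structure Multigraph where
  V : Type
  E : Type
  [finV : Fintype V]
  [finE : Fintype E]
  [decV : DecidableEq V]
  [decE : DecidableEq E]
  src : E → V
  tgt : E → V
  connected : ∀ u v : V, Relation.ReflTransGen
    (fun a b => ∃ e, (src e = a ∧ tgt e = b) ∨ (src e = b ∧ tgt e = a)) u v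

attribute [instance] Multigraph.finV Multigraph.finE Multigraph.decV Multigraph.decE

namespace Multigraph

variable (G : Multigraph)

/-- The simplicial boundary map `∂ : C(G,ℝ) = ℝ^E → ℝ^V`. -/
def boundary : (G.E → ℝ) →ₗ[ℝ] (G.V → ℝ) :=
  LinearMap.pi fun v =>
    ∑ e : G.E, (((if G.tgt e = v then (1 : ℝ) else 0) - (if G.src e = v then 1 else 0)) •
      LinearMap.proj e)

/-- The first real homology of `G`, as the subspace of 1-cycles in `ℝ^E`. -/
def H1 : Submodule ℝ (G.E → ℝ) := LinearMap.ker G.boundary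

/-- The weighted ℓ¹-norm on chains; its restriction to `H1` is the stable norm. -/
def wnorm (w : G.E → ℝ) (u : G.E → ℝ) : ℝ := ∑ e : G.E, w e * |u e|

/-- The stable ball: unit ball of the stable norm in `H_1(G,ℝ)`. -/
def stableBall (w : G.E → ℝ) : Set (G.E → ℝ) :=
  {u | u ∈ G.H1 ∧ G.wnorm w u ≤ 1}

/-- An oriented simple circuit of `G`: a closed oriented edge walk visiting each of its
vertices exactly once (starting point immaterial, encoded by indexing over `ZMod n`). -/
structure Circuit (G : Multigraph) where
  n : ℕ
  npos : 0 < n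
  vert : ZMod n → G.V
  edge : ZMod n → G.E
  dir : ZMod n → Bool
  vertInj : Function.Injective vert
  edgeInj : Function.Injective edge
  incid : ∀ i, (dir i = true ∧ G.src (edge i) = vert i ∧ G.tgt (edge i) = vert (i + 1)) ∨
      (dir i = false ∧ G.src (edge i) = vert (i + 1) ∧ G.tgt (edge i) = vert i)

/-- The 1-chain associated to an oriented simple circuit. -/
def Circuit.chain {G : Multigraph} (C : Circuit G) : G.E → ℝ := fun e =>
  haveI : NeZero C.n := ⟨C.npos.ne'⟩
  ∑ i : ZMod C.n, if C.edge i = e then (if C.dir i then (1 : ℝ) else -1) else 0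

/-- The `w`-length of an oriented simple circuit. -/
def Circuit.wlen {G : Multigraph} (C : Circuit G) (w : G.E → ℝ) : ℝ :=
  haveI : NeZero C.n := ⟨C.npos.ne'⟩
  ∑ i : ZMod C.n, w (C.edge i)

/-! ### Auxiliary lemmas -/

lemma boundary_apply (u : G.E → ℝ) (v : G.V) :
    G.boundary u v =
      ∑ e : G.E, ((if G.tgt e = v then (1 : ℝ) else 0) - (if G.src e = v then 1 else 0)) * u e := by
  simp [boundary, LinearMap.pi_apply]

namespace Circuit

variable {G} (C : Circuit G)

/-- The sign of the `i`-th edge of the circuit. -/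
def sgn (i : ZMod C.n) : ℝ := if C.dir i then 1 else -1

lemma abs_sgn (i : ZMod C.n) : |C.sgn i| = 1 := by
  unfold sgn; split <;> simp

lemma sgn_mul_self (i : ZMod C.n) : C.sgn i * C.sgn i = 1 := by
  unfold sgn; split <;> norm_num

lemma chain_def (e : G.E) :
    haveI : NeZero C.n := ⟨C.npos.ne'⟩
    C.chain e = ∑ i : ZMod C.n, if C.edge i = e then C.sgn i else 0 := rfl

lemma chain_edge (j : ZMod C.n) :
    haveI : NeZero C.n := ⟨C.npos.ne'⟩
    C.chain (C.edge j) = C.sgn j := by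
  haveI : NeZero C.n := ⟨C.npos.ne'⟩
  rw [chain_def]
  rw [Finset.sum_eq_single j]
  · simp
  · intro i _ hij
    have : C.edge i ≠ C.edge j := fun h => hij (C.edgeInj h)
    simp [this]
  · simp

lemma chain_off {e : G.E} (h : ∀ j, C.edge j ≠ e) : C.chain e = 0 := by
  haveI : NeZero C.n := ⟨C.npos.ne'⟩
  rw [chain_def]
  exact Finset.sum_eq_zero fun i _ => by simp [h i]

lemma wlen_pos (w : G.E → ℝ) (hw : ∀ e, 0 < w e) : 0 < C.wlen w := by
  haveI : NeZero C.n := ⟨C.npos.ne'⟩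
  exact Finset.sum_pos (fun i _ => hw _) Finset.univ_nonempty

lemma wnorm_chain (w : G.E → ℝ) : G.wnorm w C.chain = C.wlen w := by
  haveI : NeZero C.n := ⟨C.npos.ne'⟩
  have key : ∀ e : G.E, w e * |C.chain e| =
      ∑ i : ZMod C.n, if C.edge i = e then w e else 0 := by
    intro e
    by_cases h : ∃ j, C.edge j = e
    · obtain ⟨j, rfl⟩ := h
      rw [chain_edge, abs_sgn, mul_one]
      rw [Finset.sum_eq_single j]
      · simp
      · intro i _ hij
        have : C.edge i ≠ C.edge j := fun h => hij (C.edgeInj h)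
        simp [this]
      · simp
    · push_neg at h
      rw [C.chain_off h]
      rw [Finset.sum_eq_zero fun i _ => by simp [h i]]
      simp
  unfold wnorm wlen
  rw [Finset.sum_congr rfl fun e _ => key e, Finset.sum_comm]
  refine Finset.sum_congr rfl fun i _ => ?_
  have : ∀ e : G.E, (if C.edge i = e then w e else 0) = if C.edge i = e then w (C.edge i) else 0 := by
    intro e; split <;> simp_all
  rw [Finset.sum_congr rfl fun e _ => this e, Finset.sum_ite_eq]
  simp

/-- coefficient of edge `e` at vertex `v` in the boundary map -/
lemma coef_edge (j : ZMod C.n) (v : G.V) :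
    ((if G.tgt (C.edge j) = v then (1 : ℝ) else 0) - (if G.src (C.edge j) = v then 1 else 0))
      = C.sgn j * ((if C.vert (j + 1) = v then 1 else 0) - (if C.vert j = v then 1 else 0)) := by
  rcases C.incid j with ⟨hd, hs, ht⟩ | ⟨hd, hs, ht⟩ <;> rw [hs, ht] <;> simp [sgn, hd]

lemma boundary_supported (y : G.E → ℝ) (hsupp : ∀ e, (∀ j, C.edge j ≠ e) → y e = 0) (v : G.V) :
    haveI : NeZero C.n := ⟨C.npos.ne'⟩
    G.boundary y v = ∑ j : ZMod C.n,
      C.sgn j * ((if C.vert (j + 1) = v then 1 else 0) - (if C.vert j = v then 1 else 0))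
        * y (C.edge j) := by
  haveI : NeZero C.n := ⟨C.npos.ne'⟩
  rw [boundary_apply]
  have key : ∀ e : G.E,
      ((if G.tgt e = v then (1 : ℝ) else 0) - (if G.src e = v then 1 else 0)) * y e =
      ∑ j : ZMod C.n, if C.edge j = e then
        C.sgn j * ((if C.vert (j + 1) = v then 1 else 0) - (if C.vert j = v then 1 else 0))
          * y (C.edge j) else 0 := by
    intro e
    by_cases h : ∃ j, C.edge j = e
    · obtain ⟨j, rfl⟩ := h
      rw [Finset.sum_eq_single j]
      · simp [coef_edge]
      · intro i _ hij
        have : C.edge i ≠ C.edge j := fun h => hij (C.edgeInj h)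
        simp [this]
      · simp
    · push_neg at h
      rw [hsupp e h, mul_zero]
      exact (Finset.sum_eq_zero fun i _ => by simp [h i]).symm
  rw [Finset.sum_congr rfl fun e _ => key e, Finset.sum_comm]
  refine Finset.sum_congr rfl fun j _ => ?_
  rw [Finset.sum_ite_eq]
  simp

lemma boundary_chain : G.boundary C.chain = 0 := by
  haveI : NeZero C.n := ⟨C.npos.ne'⟩
  funext v
  rw [C.boundary_supported C.chain (fun e h => C.chain_off h) v]
  have : ∀ j : ZMod C.n,
      C.sgn j * ((if C.vert (j + 1) = v then (1:ℝ) else 0) - (if C.vert j = v then 1 else 0))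
        * C.chain (C.edge j)
      = (if C.vert (j + 1) = v then (1:ℝ) else 0) - (if C.vert j = v then 1 else 0) := by
    intro j
    rw [chain_edge]
    rw [mul_comm (C.sgn j), mul_assoc, sgn_mul_self, mul_one]
  rw [Finset.sum_congr rfl fun j _ => this j, Finset.sum_sub_distrib]
  have : ∑ j : ZMod C.n, (if C.vert (j + 1) = v then (1:ℝ) else 0)
      = ∑ j : ZMod C.n, (if C.vert j = v then (1:ℝ) else 0) :=
    Fintype.sum_equiv (Equiv.addRight (1 : ZMod C.n)) _ _ (fun j => rfl)
  rw [this, sub_self]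
  rfl

/-- Any cycle supported on the edges of a simple circuit is a multiple of the circuit chain. -/
lemma eq_smul_chain_of_supported (y : G.E → ℝ) (hy : G.boundary y = 0)
    (hsupp : ∀ e, (∀ j, C.edge j ≠ e) → y e = 0) :
    ∃ c : ℝ, y = c • C.chain := by
  haveI : NeZero C.n := ⟨C.npos.ne'⟩
  set c : ZMod C.n → ℝ := fun i => C.sgn i * y (C.edge i) with hc
  have key : ∀ i : ZMod C.n, c i = c (i + 1) := by
    intro i
    have h0 : G.boundary y (C.vert (i + 1)) = 0 := by rw [hy]; rfl
    rw [C.boundary_supported y hsupp (C.vert (i + 1))] at h0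
    have hterm : ∀ j : ZMod C.n,
        C.sgn j * ((if C.vert (j + 1) = C.vert (i + 1) then (1:ℝ) else 0)
          - (if C.vert j = C.vert (i + 1) then 1 else 0)) * y (C.edge j)
        = ((if j = i then (1:ℝ) else 0) - (if j = i + 1 then 1 else 0)) * c j := by
      intro j
      have h1 : (C.vert (j + 1) = C.vert (i + 1)) ↔ (j = i) := by
        constructor
        · intro h; have := C.vertInj h; exact add_right_cancel this
        · rintro rfl; rfl
      have h2 : (C.vert j = C.vert (i + 1)) ↔ (j = i + 1) := by
        constructor
        · exact fun h => C.vertInj h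
        · rintro rfl; rfl
      simp only [hc]
      rw [if_congr h1 rfl rfl, if_congr h2 rfl rfl]
      ring
    rw [Finset.sum_congr rfl fun j _ => hterm j] at h0
    simp only [sub_mul] at h0
    rw [Finset.sum_sub_distrib] at h0
    have e1 : ∑ j : ZMod C.n, (if j = i then (1:ℝ) else 0) * c j = c i := by
      rw [Finset.sum_congr rfl (fun j _ => by rw [ite_mul, one_mul, zero_mul]),
        Finset.sum_ite_eq']
      simp
    have e2 : ∑ j : ZMod C.n, (if j = i + 1 then (1:ℝ) else 0) * c j = c (i + 1) := by
      rw [Finset.sum_congr rfl (fun j _ => by rw [ite_mul, one_mul, zero_mul]),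
        Finset.sum_ite_eq']
      simp
    rw [e1, e2] at h0
    linarith
  have const : ∀ i : ZMod C.n, c i = c 0 := by
    intro i
    obtain ⟨k, rfl⟩ := ZMod.natCast_zmod_surjective i
    induction k with
    | zero => simp
    | succ k ih =>
      have : ((k + 1 : ℕ) : ZMod C.n) = (k : ZMod C.n) + 1 := by push_cast; ring
      rw [this, ← key, ih]
  refine ⟨c 0, funext fun e => ?_⟩
  by_cases h : ∃ j, C.edge j = e
  · obtain ⟨j, rfl⟩ := h
    have : y (C.edge j) = C.sgn j * c j := by
      rw [hc]; dsimp only; rw [← mul_assoc, sgn_mul_self, one_mul]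
    rw [this, const j]
    simp only [Pi.smul_apply, smul_eq_mul, chain_edge]
    ring
  · push_neg at h
    rw [hsupp e h]
    simp [C.chain_off h]

end Circuit

lemma wnorm_smul (w : G.E → ℝ) (a : ℝ) (u : G.E → ℝ) :
    G.wnorm w (a • u) = |a| * G.wnorm w u := by
  unfold wnorm
  rw [Finset.mul_sum]
  refine Finset.sum_congr rfl fun e _ => ?_
  simp only [Pi.smul_apply, smul_eq_mul, abs_mul]
  ring

end Multigraph

open Multigraph in
/-- **Lemma A1.** Every oriented simple circuit `C` of `G`, identified with the corresponding
vector of `C(G,ℝ)`, is proportional to a vertex (extreme point) of the stable ball: the point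
`C / ‖C‖_w` is a vertex of `B(G,w)`, and the proportionality factor `‖C‖_w` is exactly the
`w`-length of the circuit. -/
theorem circuit_normalized_mem_extremePoints
    (G : Multigraph) (w : G.E → ℝ) (hw : ∀ e, 0 < w e) (C : Multigraph.Circuit G) :
    (G.wnorm w C.chain)⁻¹ • C.chain ∈ Set.extremePoints ℝ (G.stableBall w) ∧
    G.wnorm w C.chain = C.wlen w := by
  have hwn : G.wnorm w C.chain = C.wlen w := C.wnorm_chain w
  refine ⟨?_, hwn⟩
  haveI : NeZero C.n := ⟨C.npos.ne'⟩
  set M : ℝ := C.wlen w with hM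
  have hMpos : 0 < M := C.wlen_pos w hw
  have hMinv : 0 < M⁻¹ := inv_pos.mpr hMpos
  rw [hwn]
  set x : G.E → ℝ := M⁻¹ • C.chain with hx
  have hxH1 : x ∈ G.H1 := by
    have : G.boundary x = 0 := by
      rw [hx, map_smul, C.boundary_chain, smul_zero]
    exact this
  have hxnorm : G.wnorm w x = 1 := by
    rw [hx, G.wnorm_smul, C.wnorm_chain, abs_of_pos hMinv, ← hM, inv_mul_cancel₀ hMpos.ne']
  have hxmem : x ∈ G.stableBall w := ⟨hxH1, le_of_eq hxnorm⟩
  refine ⟨hxmem, ?_⟩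
  rintro y ⟨hyH1, hynorm⟩ z ⟨hzH1, hznorm⟩ hseg
  obtain ⟨a, b, ha, hb, hab, hxy⟩ := hseg
  -- pointwise equality in the triangle inequality
  have habs : ∀ e, |x e| = a * |y e| + b * |z e| := by
    have hle : ∀ e ∈ Finset.univ (α := G.E),
        w e * |x e| ≤ w e * (a * |y e| + b * |z e|) := by
      intro e _
      refine mul_le_mul_of_nonneg_left ?_ (hw e).le
      have : x e = a * y e + b * z e := by
        rw [← hxy]; simp
      rw [this]
      calc |a * y e + b * z e| ≤ |a * y e| + |b * z e| := abs_add_le _ _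
        _ = a * |y e| + b * |z e| := by
            rw [abs_mul, abs_mul, abs_of_pos ha, abs_of_pos hb]
    have hsum : ∑ e : G.E, w e * (a * |y e| + b * |z e|) ≤ ∑ e : G.E, w e * |x e| := by
      have expand : ∑ e : G.E, w e * (a * |y e| + b * |z e|)
          = a * G.wnorm w y + b * G.wnorm w z := by
        unfold Multigraph.wnorm
        rw [Finset.mul_sum, Finset.mul_sum, ← Finset.sum_add_distrib]
        refine Finset.sum_congr rfl fun e _ => by ring
      rw [expand]
      have h1 : a * G.wnorm w y ≤ a := by
        nlinarith
      have h2 : b * G.wnorm w z ≤ b := by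
        nlinarith
      have : (1 : ℝ) ≤ ∑ e : G.E, w e * |x e| := by
        rw [show ∑ e : G.E, w e * |x e| = G.wnorm w x from rfl, hxnorm]
      linarith
    have heq : ∀ e ∈ Finset.univ (α := G.E),
        w e * |x e| = w e * (a * |y e| + b * |z e|) := by
      have := Finset.sum_le_sum hle
      have htot : ∑ e : G.E, w e * |x e| = ∑ e : G.E, w e * (a * |y e| + b * |z e|) :=
        le_antisymm (Finset.sum_le_sum hle) hsum
      intro e he
      by_contra hne
      have hlt : w e * |x e| < w e * (a * |y e| + b * |z e|) := lt_of_le_of_ne (hle e he) hne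
      have : ∑ e : G.E, w e * |x e| < ∑ e : G.E, w e * (a * |y e| + b * |z e|) :=
        Finset.sum_lt_sum hle ⟨e, he, hlt⟩
      linarith [this, htot.ge]
    intro e
    have := heq e (Finset.mem_univ e)
    have hwne := (hw e).ne'
    exact mul_left_cancel₀ hwne this
  -- off-circuit edges vanish
  have hysupp : ∀ e, (∀ j, C.edge j ≠ e) → y e = 0 := by
    intro e he
    have hx0 : x e = 0 := by
      rw [hx]; simp [C.chain_off he]
    have := habs e
    rw [hx0, abs_zero] at this
    have h1 : 0 ≤ a * |y e| := mul_nonneg ha.le (abs_nonneg _)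
    have h2 : 0 ≤ b * |z e| := mul_nonneg hb.le (abs_nonneg _)
    have : a * |y e| = 0 := by linarith
    have := (mul_eq_zero.mp this).resolve_left ha.ne'
    exact abs_eq_zero.mp this
  have hzsupp : ∀ e, (∀ j, C.edge j ≠ e) → z e = 0 := by
    intro e he
    have hx0 : x e = 0 := by
      rw [hx]; simp [C.chain_off he]
    have := habs e
    rw [hx0, abs_zero] at this
    have h1 : 0 ≤ a * |y e| := mul_nonneg ha.le (abs_nonneg _)
    have h2 : 0 ≤ b * |z e| := mul_nonneg hb.le (abs_nonneg _)
    have : b * |z e| = 0 := by linarith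
    have := (mul_eq_zero.mp this).resolve_left hb.ne'
    exact abs_eq_zero.mp this
  -- y and z are multiples of the chain
  obtain ⟨cy, hcy⟩ := C.eq_smul_chain_of_supported y hyH1 hysupp
  obtain ⟨cz, hcz⟩ := C.eq_smul_chain_of_supported z hzH1 hzsupp
  have hcyle : |cy| ≤ M⁻¹ := by
    rw [hcy, G.wnorm_smul, C.wnorm_chain, ← hM] at hynorm
    rw [← one_div]
    exact (le_div_iff₀ hMpos).mpr hynorm
  have hczle : |cz| ≤ M⁻¹ := by
    rw [hcz, G.wnorm_smul, C.wnorm_chain, ← hM] at hznorm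
    rw [← one_div]
    exact (le_div_iff₀ hMpos).mpr hznorm
  -- identify the coefficients
  have hcoef : a * cy + b * cz = M⁻¹ := by
    have hval : x (C.edge 0) = (a * cy + b * cz) * C.chain (C.edge 0) := by
      rw [← hxy, hcy, hcz]
      simp only [Pi.add_apply, Pi.smul_apply, smul_eq_mul]
      ring
    have hx0 : x (C.edge 0) = M⁻¹ * C.chain (C.edge 0) := by
      rw [hx]; simp
    have hne : C.chain (C.edge 0) ≠ 0 := by
      rw [C.chain_edge]
      intro h
      have := C.abs_sgn 0
      rw [h, abs_zero] at this
      norm_num at this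
    have := hval.symm.trans hx0
    exact mul_right_cancel₀ hne this
  have hcy' : cy = M⁻¹ := by
    have h1 : cy ≤ M⁻¹ := (le_abs_self cy).trans hcyle
    have h2 : cz ≤ M⁻¹ := (le_abs_self cz).trans hczle
    nlinarith [mul_le_mul_of_nonneg_left h1 ha.le, mul_le_mul_of_nonneg_left h2 hb.le]
  have hcz' : cz = M⁻¹ := by
    have h1 : cy ≤ M⁻¹ := (le_abs_self cy).trans hcyle
    have h2 : cz ≤ M⁻¹ := (le_abs_self cz).trans hczle
    nlinarith [mul_le_mul_of_nonneg_left h1 ha.le, mul_le_mul_of_nonneg_left h2 hb.le]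
  rw [hcy, hcy', hx]
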